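/- There exist absolute constants C, c > 0 such that the following holds: if A ⊆ {0,...,D}, B ⊆ ℤ, A ⊕ B = ℤ is a tiling, and B is M-periodic with M its least positive period, then M ≤ C·exp(c·√D·(log D)·√(log log D)) for D ≥ 3. -/

import Mathlib

open Polynomial Finset

section Main

lemma aux_sum_range_le : ∀ (n : ℕ) (s : Finset ℕ), s.card = n →
    ∑ i ∈ Finset.range n, i ≤ ∑ i ∈ s, i := by
  intro n
  induction n with
  | zero => simp
  | succ k ih =>
    intro s hs
    have hne : s.Nonempty := Finset.card_pos.mp (by omega)
    have hmax := s.max'_mem hne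
    have hsub : s ⊆ Finset.range (s.max' hne + 1) := fun x hx =>
      Finset.mem_range.mpr (Nat.lt_succ_of_le (Finset.le_max' s x hx))
    have hcard : k ≤ s.max' hne := by
      have := Finset.card_le_card hsub
      simp only [Finset.card_range] at this
      omega
    have herase : (s.erase (s.max' hne)).card = k := by
      rw [Finset.card_erase_of_mem hmax]; omega
    have h1 := ih (s.erase (s.max' hne)) herase
    have hsum : ∑ i ∈ s, i = s.max' hne + ∑ i ∈ s.erase (s.max' hne), i :=
      (Finset.add_sum_erase s id hmax).symm
    rw [Finset.sum_range_succ, hsum]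
    omega

lemma aux_claimA : ∀ S : Finset ℕ, (∀ p ∈ S, 3 ≤ p) →
    ∑ p ∈ S, (p - 1) ≤ ∏ p ∈ S, (p - 1) := by
  intro S
  induction S using Finset.induction_on with
  | empty => simp
  | insert q S' hq ih =>
    intro h3
    rw [Finset.sum_insert hq, Finset.prod_insert hq]
    have hq3 := h3 q (Finset.mem_insert_self q S')
    have hS' := fun p hp => h3 p (Finset.mem_insert_of_mem hp)
    have hih := ih hS'
    rcases S'.eq_empty_or_nonempty with rfl | hne
    · simp
    · have hP2 : 2 ≤ ∏ p ∈ S', (p - 1) := by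
        obtain ⟨x, hx⟩ := hne
        have hx3 := hS' x hx
        have h1 : x - 1 ≤ ∏ p ∈ S', (p - 1) :=
          Finset.single_le_prod' (f := fun p => p - 1) (fun p hp => by have := hS' p hp; show 1 ≤ p - 1; omega) hx
        omega
      obtain ⟨P', hP'⟩ : ∃ P', ∏ p ∈ S', (p - 1) = P' + 1 := ⟨(∏ p ∈ S', (p - 1)) - 1, by omega⟩
      rw [hP'] at hih hP2 ⊢
      have h1 : 1 ≤ P' := by omega
      have ht : 2 ≤ q - 1 := by omega
      calc q - 1 + ∑ p ∈ S', (p - 1) ≤ (q - 1) + (P' + 1) := by omega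
        _ ≤ (q - 1) + (q - 1) * P' := by
            have h2 : 2 * P' ≤ (q - 1) * P' := Nat.mul_le_mul_right _ ht
            omega
        _ = (q - 1) * (P' + 1) := by ring

lemma aux_sum_le_two_prod (S : Finset ℕ) (h2 : ∀ p ∈ S, 2 ≤ p) :
    ∑ p ∈ S, (p - 1) ≤ 2 * ∏ p ∈ S, (p - 1) := by
  classical
  have h3 : ∀ p ∈ S.erase 2, 3 ≤ p := by
    intro p hp
    have h := Finset.mem_erase.mp hp
    have := h2 p h.2
    omega
  have hA := aux_claimA (S.erase 2) h3
  have hprodpos : 1 ≤ ∏ p ∈ S.erase 2, (p - 1) :=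
    Finset.one_le_prod' (fun p hp => by have := h3 p hp; omega)
  by_cases h2m : 2 ∈ S
  · have hsum : (2 - 1) + ∑ p ∈ S.erase 2, (p - 1) = ∑ p ∈ S, (p - 1) :=
      Finset.add_sum_erase S (fun p => p - 1) h2m
    have hprod : (2 - 1) * ∏ p ∈ S.erase 2, (p - 1) = ∏ p ∈ S, (p - 1) :=
      Finset.mul_prod_erase S (fun p => p - 1) h2m
    omega
  · rw [Finset.erase_eq_of_notMem h2m] at hA hprodpos
    omega

lemma aux_prod_le_totient {e : ℕ} (he : e ≠ 0) :
    ∏ p ∈ e.primeFactors, (p - 1) ≤ e.totient := by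
  rw [Nat.totient_eq_prod_factorization he, Finsupp.prod, Nat.support_factorization]
  apply Finset.prod_le_prod'
  intro p hp
  have hpp : p.Prime := Nat.prime_of_mem_primeFactors hp
  have : 1 ≤ p ^ (e.factorization p - 1) := Nat.one_le_pow _ _ hpp.pos
  calc p - 1 = 1 * (p - 1) := (one_mul _).symm
    _ ≤ p ^ (e.factorization p - 1) * (p - 1) := Nat.mul_le_mul_right _ this

lemma aux_sum_biUnion_le {α β : Type*} [DecidableEq α] [DecidableEq β]
    (s : Finset α) (t : α → Finset β) (f : β → ℕ) :
    ∑ x ∈ s.biUnion t, f x ≤ ∑ a ∈ s, ∑ x ∈ t a, f x := by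
  induction s using Finset.induction_on with
  | empty => simp
  | insert a s' hq ih =>
    rw [Finset.biUnion_insert, Finset.sum_insert hq]
    have h1 := Finset.sum_union_inter (s₁ := t a) (s₂ := s'.biUnion t) (f := f)
    omega

lemma aux_pow_eq {m : ℕ} [NeZero m] (ζ : ℂ) (hζ : ζ ^ m = 1) {j k : ℕ}
    (h : (j : ZMod m) = (k : ZMod m)) : ζ ^ j = ζ ^ k := by
  rw [pow_eq_pow_mod j hζ, pow_eq_pow_mod k hζ]
  congr 1
  exact (ZMod.natCast_eq_natCast_iff _ _ _).mp h

lemma aux_sum_val {m : ℕ} [NeZero m] (f : ℕ → ℂ) :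
    ∑ x : ZMod m, f x.val = ∑ i ∈ Finset.range m, f i := by
  apply Finset.sum_nbij' (i := fun (x : ZMod m) => x.val) (j := fun (i : ℕ) => (i : ZMod m))
  · intro x _
    exact Finset.mem_range.mpr (ZMod.val_lt x)
  · intro i _
    exact Finset.mem_univ _
  · intro x _
    exact ZMod.natCast_rightInverse x
  · intro i hi
    exact ZMod.val_cast_of_lt (Finset.mem_range.mp hi)
  · intro x _
    rfl

set_option maxHeartbeats 3200000 in
/-- upper bound: if `A ⊆ {0,…,D}` tiles `ℤ` with complement `B` of
least period `M`, then `M ≤ C·exp(c·√D·log D·√(log log D))`. -/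
theorem stmt_12 : ∃ C c : ℝ, 0 < C ∧ 0 < c ∧
    ∀ D : ℕ, 3 ≤ D → ∀ A : Finset ℕ, A ⊆ Finset.range (D + 1) →
    ∀ B : Set ℤ,
      (∀ n : ℤ, ∃! p : ℕ × ℤ, p.1 ∈ A ∧ p.2 ∈ B ∧ (p.1 : ℤ) + p.2 = n) →
    ∀ M : ℤ, IsLeast {t : ℤ | 0 < t ∧ ∀ n : ℤ, n ∈ B ↔ n + t ∈ B} M →
      (M : ℝ) ≤ C * Real.exp (c * Real.sqrt D * Real.log D *
        Real.sqrt (Real.log (Real.log D))) := by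
  classical
  refine ⟨(30 : ℝ) ^ (12 : ℕ), 6, by positivity, by norm_num, ?_⟩
  intro D hD A hA B hT M hM
  obtain ⟨⟨hMpos, hMper⟩, hMle⟩ := hM
  set m : ℕ := M.toNat with hmdef
  have hMm : (m : ℤ) = M := Int.toNat_of_nonneg hMpos.le
  have hm : 0 < m := by omega
  haveI : NeZero m := ⟨hm.ne'⟩
  -- periodicity with any multiple of M
  have hper : ∀ k : ℤ, ∀ n : ℤ, n ∈ B ↔ n + k * M ∈ B := by
    intro k
    induction k using Int.induction_on with
    | zero => simp
    | succ i ih =>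
      intro n
      have h1 := hMper (n + (i : ℤ) * M)
      have e : n + (i : ℤ) * M + M = n + ((i : ℤ) + 1) * M := by ring
      rw [ih n, h1, e]
    | pred i ih =>
      intro n
      have h1 := hMper (n + (-(i : ℤ) - 1) * M)
      have e : n + (-(i : ℤ) - 1) * M + M = n + (-(i : ℤ)) * M := by ring
      rw [e] at h1
      rw [ih n, ← h1]
  have hmem : ∀ n : ℤ, n ∈ B ↔ (((n : ZMod m).val : ℤ) ∈ B) := by
    intro n
    rw [ZMod.val_intCast n]
    have h := hper (n / (m : ℤ)) (n % (m : ℤ))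
    have e : n % (m : ℤ) + n / (m : ℤ) * M = n := by
      rw [← hMm, mul_comm]
      exact Int.emod_add_mul_ediv n m
    rw [e] at h
    exact h.symm
  -- tiling restated
  have htile' : ∀ n : ℤ, ∃! a : ℕ, a ∈ A ∧ (n - (a : ℤ)) ∈ B := by
    intro n
    obtain ⟨⟨a, b⟩, ⟨haA, hbB, hab⟩, huniq⟩ := hT n
    refine ⟨a, ⟨haA, by rw [← hab]; simpa using hbB⟩, ?_⟩
    rintro a' ⟨ha'A, ha'B⟩
    have := huniq (a', n - (a' : ℤ)) ⟨ha'A, ha'B, by ring⟩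
    exact congrArg Prod.fst this
  -- the indicator function of B on Z/m
  set G : ZMod m → ℚ := fun x => if ((x.val : ℤ) ∈ B) then 1 else 0 with hGdef
  have hG1 : ∀ n : ℤ, (G (n : ZMod m) = 1 ↔ n ∈ B) := by
    intro n
    rw [hmem n]
    by_cases h : (((n : ZMod m).val : ℤ) ∈ B) <;> simp [hGdef, h]
  have hGsub : ∀ (x : ZMod m) (a : ℕ),
      G (x - (a : ZMod m)) = if ((x.val : ℤ) - (a : ℤ) ∈ B) then 1 else 0 := by
    intro x a
    have e : ((((x.val : ℤ) - (a : ℤ)) : ℤ) : ZMod m) = x - (a : ZMod m) := by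
      push_cast
      rw [ZMod.natCast_rightInverse x]
    have h := hmem ((x.val : ℤ) - (a : ℤ))
    rw [e] at h
    by_cases hb : ((x.val : ℤ) - (a : ℤ) ∈ B)
    · rw [if_pos hb]
      have h2 := h.mp hb
      show (if (((x - (a : ZMod m)).val : ℤ) ∈ B) then (1 : ℚ) else 0) = 1
      rw [if_pos h2]
    · rw [if_neg hb]
      have h2 : ¬ (((x - (a : ZMod m)).val : ℤ) ∈ B) := fun hc => hb (h.mpr hc)
      show (if (((x - (a : ZMod m)).val : ℤ) ∈ B) then (1 : ℚ) else 0) = 0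
      rw [if_neg h2]
  -- convolution identity
  have hconv : ∀ x : ZMod m, ∑ a ∈ A, G (x - (a : ZMod m)) = 1 := by
    intro x
    obtain ⟨a₀, ⟨ha₀A, ha₀B⟩, huniq⟩ := htile' ((x.val : ℤ))
    have hstep : ∀ a ∈ A, G (x - (a : ZMod m)) = if a = a₀ then 1 else 0 := by
      intro a haA
      rw [hGsub x a]
      by_cases hb : ((x.val : ℤ) - (a : ℤ) ∈ B)
      · rw [if_pos hb, if_pos (huniq a ⟨haA, hb⟩)]
      · rw [if_neg hb, if_neg]
        intro hc
        subst hc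
        exact hb ha₀B
    rw [Finset.sum_congr rfl hstep, Finset.sum_ite_eq' A a₀ (fun _ => (1 : ℚ))]
    simp [ha₀A]
  -- polynomials
  set PA : ℚ[X] := ∑ a ∈ A, (X : ℚ[X]) ^ a with hPAdef
  set PG : ℚ[X] := ∑ x : ZMod m, Polynomial.C (G x) * (X : ℚ[X]) ^ x.val with hPGdef
  have hevalA : ∀ ζ : ℂ, Polynomial.aeval ζ PA = ∑ a ∈ A, ζ ^ a := by
    intro ζ
    rw [hPAdef, map_sum]
    simp
  have hevalG : ∀ ζ : ℂ, Polynomial.aeval ζ PG = ∑ x : ZMod m, (G x : ℂ) * ζ ^ x.val := by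
    intro ζ
    rw [hPGdef, map_sum]
    apply Finset.sum_congr rfl
    intro x _
    rw [map_mul, map_pow, Polynomial.aeval_C, Polynomial.aeval_X]
    norm_num
  have hkeyC : ∀ ζ : ℂ, ζ ^ m = 1 → ζ ≠ 1 →
      (Polynomial.aeval ζ PA) * (Polynomial.aeval ζ PG) = 0 := by
    intro ζ hζm hζ1
    rw [hevalA ζ, hevalG ζ, Finset.sum_mul_sum]
    have step1 : ∀ a ∈ A, ∑ x : ZMod m, ζ ^ (a : ℕ) * ((G x : ℂ) * ζ ^ x.val)
        = ∑ y : ZMod m, (G (y - (a : ZMod m)) : ℂ) * ζ ^ y.val := by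
      intro a _
      rw [← Equiv.sum_comp (Equiv.addRight ((a : ZMod m)))
        (fun y => (G (y - (a : ZMod m)) : ℂ) * ζ ^ y.val)]
      apply Finset.sum_congr rfl
      intro x _
      simp only [Equiv.coe_addRight, add_sub_cancel_right]
      have hexp : ζ ^ ((x + (a : ZMod m)).val) = ζ ^ (x.val + a) := by
        apply aux_pow_eq ζ hζm
        push_cast
        rw [ZMod.natCast_rightInverse (x + (a : ZMod m)), ZMod.natCast_rightInverse x]
      rw [hexp, pow_add]
      ring
    rw [Finset.sum_congr rfl step1, Finset.sum_comm]
    have step2 : ∀ y : ZMod m, ∑ a ∈ A, (G (y - (a : ZMod m)) : ℂ) * ζ ^ y.val = ζ ^ y.val := by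
      intro y
      rw [← Finset.sum_mul]
      have hc : (∑ a ∈ A, (G (y - (a : ZMod m)) : ℂ)) = 1 := by
        have hq := hconv y
        rw [← Rat.cast_sum, hq, Rat.cast_one]
      rw [hc, one_mul]
    rw [Finset.sum_congr rfl (fun y _ => step2 y)]
    rw [aux_sum_val (fun i => ζ ^ i)]
    rw [geom_sum_eq hζ1 m, hζm]
    simp
  have hdich : ∀ e ∈ m.divisors, 1 < e →
      (Polynomial.cyclotomic e ℚ ∣ PA ∨ Polynomial.cyclotomic e ℚ ∣ PG) := by
    intro e he h1e
    obtain ⟨hedvd, -⟩ := Nat.mem_divisors.mp he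
    have he0 : e ≠ 0 := by omega
    have hζ := Complex.isPrimitiveRoot_exp e he0
    set ζ : ℂ := Complex.exp (2 * Real.pi * Complex.I / e) with hζdef
    have hζm : ζ ^ m = 1 := by
      obtain ⟨k, hk⟩ := hedvd
      rw [hk, pow_mul, hζ.pow_eq_one, one_pow]
    have hζ1 : ζ ≠ 1 := by
      intro hcon
      have h2 := hζ.eq_orderOf
      rw [hcon, orderOf_one] at h2
      omega
    have h0 := hkeyC ζ hζm hζ1
    rcases mul_eq_zero.mp h0 with h | h
    · left
      have hd := minpoly.dvd ℚ ζ h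
      rwa [← Polynomial.cyclotomic_eq_minpoly_rat hζ (by omega)] at hd
    · right
      have hd := minpoly.dvd ℚ ζ h
      rwa [← Polynomial.cyclotomic_eq_minpoly_rat hζ (by omega)] at hd
  -- key: for every prime p dividing m there is a cyclotomic factor of PA of
  -- index dividing m but not m/p
  have hprime : ∀ p : ℕ, p.Prime → p ∣ m →
      ∃ e, e ∈ m.divisors ∧ ¬ e ∣ m / p ∧ Polynomial.cyclotomic e ℚ ∣ PA := by
    intro p hp hpm
    by_contra hcon
    push_neg at hcon
    set k := m / p with hkdef
    have hk0 : 0 < k := Nat.div_pos (Nat.le_of_dvd hm hpm) hp.pos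
    have hkm : k < m := Nat.div_lt_self hm hp.one_lt
    have hGdvd : ∀ e ∈ m.divisors, ¬ e ∣ k → Polynomial.cyclotomic e ℚ ∣ PG := by
      intro e he hnd
      have h1e : 1 < e := by
        have he0 : e ≠ 0 := (Nat.pos_of_mem_divisors he).ne'
        rcases Nat.lt_or_ge e 2 with h | h
        · exfalso
          apply hnd
          have he1 : e = 1 := by omega
          rw [he1]
          exact one_dvd _
        · exact h
      rcases hdich e he h1e with h | h
      · exact absurd h (hcon e he hnd)
      · exact h
    have hdvd1 : (X : ℚ[X]) ^ m - 1 ∣ ((X : ℚ[X]) ^ k - 1) * PG := by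
      rw [← Polynomial.prod_cyclotomic_eq_X_pow_sub_one hm ℚ]
      have hsub : k.divisors ⊆ m.divisors :=
        Nat.divisors_subset_of_dvd hm.ne' (Nat.div_dvd_of_dvd hpm)
      rw [← Finset.prod_sdiff hsub]
      have h2 : ∏ e ∈ k.divisors, Polynomial.cyclotomic e ℚ = (X : ℚ[X]) ^ k - 1 :=
        Polynomial.prod_cyclotomic_eq_X_pow_sub_one hk0 ℚ
      rw [h2, mul_comm ((X : ℚ[X]) ^ k - 1) PG]
      apply mul_dvd_mul _ dvd_rfl
      apply Finset.prod_dvd_of_coprime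
      · intro a ha b hb hab
        exact Polynomial.cyclotomic.isCoprime_rat hab
      · intro e he
        obtain ⟨hem, hnk⟩ := Finset.mem_sdiff.mp he
        apply hGdvd e hem
        intro hek
        exact hnk (Nat.mem_divisors.mpr ⟨hek, hk0.ne'⟩)
    set PD : ℚ[X] :=
      ∑ x : ZMod m, Polynomial.C (G (x - (k : ZMod m)) - G x) * (X : ℚ[X]) ^ x.val with hPDdef
    have hevalD : ∀ ζ : ℂ, ζ ^ m = 1 → Polynomial.aeval ζ PD = 0 := by
      intro ζ hζm
      obtain ⟨Q, hQ⟩ := hdvd1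
      have hzero : ((ζ ^ k - 1) * (Polynomial.aeval ζ PG)) = 0 := by
        have hq := congrArg (Polynomial.aeval ζ) hQ
        simp only [map_mul, map_sub, map_pow, map_one, Polynomial.aeval_X] at hq
        rw [hζm, sub_self, zero_mul] at hq
        exact hq
      have hstep : ∑ x : ZMod m, (G (x - (k : ZMod m)) : ℂ) * ζ ^ x.val
          = ζ ^ k * ∑ x : ZMod m, (G x : ℂ) * ζ ^ x.val := by
        rw [← Equiv.sum_comp (Equiv.addRight ((k : ZMod m)))
          (fun x => (G (x - (k : ZMod m)) : ℂ) * ζ ^ x.val), Finset.mul_sum]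
        apply Finset.sum_congr rfl
        intro x _
        simp only [Equiv.coe_addRight, add_sub_cancel_right]
        have hexp : ζ ^ ((x + (k : ZMod m)).val) = ζ ^ (x.val + k) := by
          apply aux_pow_eq ζ hζm
          push_cast
          rw [ZMod.natCast_rightInverse (x + (k : ZMod m)), ZMod.natCast_rightInverse x]
        rw [hexp, pow_add]
        ring
      have hPDeval : Polynomial.aeval ζ PD
          = ∑ x : ZMod m, ((G (x - (k : ZMod m)) : ℂ) - (G x : ℂ)) * ζ ^ x.val := by
        rw [hPDdef, map_sum]
        apply Finset.sum_congr rfl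
        intro x _
        rw [map_mul, map_pow, Polynomial.aeval_C, Polynomial.aeval_X]
        norm_num
      rw [hPDeval]
      simp_rw [sub_mul]
      rw [Finset.sum_sub_distrib, hstep]
      rw [hevalG ζ] at hzero
      linear_combination hzero
    have hPDdvd : (X : ℚ[X]) ^ m - 1 ∣ PD := by
      rw [← Polynomial.prod_cyclotomic_eq_X_pow_sub_one hm ℚ]
      apply Finset.prod_dvd_of_coprime
      · intro a ha b hb hab
        exact Polynomial.cyclotomic.isCoprime_rat hab
      · intro e he
        have he0 : e ≠ 0 := (Nat.pos_of_mem_divisors he).ne'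
        have hζ := Complex.isPrimitiveRoot_exp e he0
        have hζm : (Complex.exp (2 * Real.pi * Complex.I / e)) ^ m = 1 := by
          obtain ⟨t, ht⟩ := (Nat.mem_divisors.mp he).1
          rw [ht, pow_mul, hζ.pow_eq_one, one_pow]
        have hd := minpoly.dvd ℚ _ (hevalD _ hζm)
        rwa [← Polynomial.cyclotomic_eq_minpoly_rat hζ (Nat.pos_of_ne_zero he0)] at hd
    have hPDzero : PD = 0 := by
      apply Polynomial.eq_zero_of_dvd_of_degree_lt hPDdvd
      have hdm : ((X : ℚ[X]) ^ m - 1).degree = (m : ℕ) := by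
        have h3 := Polynomial.degree_X_pow_sub_C hm (1 : ℚ)
        rwa [Polynomial.C_1] at h3
      rw [hdm, hPDdef]
      apply lt_of_le_of_lt (Polynomial.degree_sum_le _ _)
      rw [Finset.sup_lt_iff (by exact_mod_cast WithBot.bot_lt_coe m)]
      intro x _
      apply lt_of_le_of_lt (Polynomial.degree_C_mul_X_pow_le _ _)
      exact_mod_cast ZMod.val_lt x
    have hGper : ∀ x : ZMod m, G (x - (k : ZMod m)) = G x := by
      intro x
      have hco := congrArg (fun q : ℚ[X] => q.coeff x.val) hPDzero
      simp only [Polynomial.coeff_zero] at hco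
      rw [hPDdef, Polynomial.finset_sum_coeff] at hco
      rw [Finset.sum_eq_single x
        (fun y _ hyx => by
          rw [Polynomial.coeff_C_mul, Polynomial.coeff_X_pow, if_neg, mul_zero]
          intro hval
          exact hyx (ZMod.val_injective m hval.symm))
        (fun hx => absurd (Finset.mem_univ x) hx)] at hco
      rw [Polynomial.coeff_C_mul, Polynomial.coeff_X_pow, if_pos rfl, mul_one] at hco
      exact sub_eq_zero.mp hco
    have hper2 : ∀ n : ℤ, n ∈ B ↔ n + (k : ℤ) ∈ B := by
      intro n
      rw [← hG1 n, ← hG1 (n + (k : ℤ))]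
      have e1 : ((n + (k : ℤ) : ℤ) : ZMod m) = (n : ZMod m) + (k : ZMod m) := by
        push_cast
        ring
      rw [e1]
      have h2 := hGper ((n : ZMod m) + (k : ZMod m))
      rw [add_sub_cancel_right] at h2
      rw [← h2]
    have hle : M ≤ (k : ℤ) := hMle ⟨by exact_mod_cast hk0, hper2⟩
    have hlt : (k : ℤ) < M := by
      rw [← hMm]
      exact_mod_cast hkm
    omega
  -- counting: the cyclotomic factors of PA control the primes of m
  have hAne : A.Nonempty := by
    obtain ⟨a₀, ⟨ha₀, -⟩, -⟩ := htile' 0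
    exact ⟨a₀, ha₀⟩
  have hPA0 : PA ≠ 0 := by
    intro h0
    have h1 : Polynomial.eval 1 PA = (A.card : ℚ) := by
      rw [hPAdef, Polynomial.eval_finset_sum]
      simp
    rw [h0] at h1
    simp only [Polynomial.eval_zero] at h1
    have h2 : A.card = 0 := by exact_mod_cast h1.symm
    exact hAne.ne_empty (Finset.card_eq_zero.mp h2)
  have hdegPA : PA.natDegree ≤ D := by
    rw [hPAdef]
    apply Polynomial.natDegree_sum_le_of_forall_le
    intro a haA
    rw [Polynomial.natDegree_X_pow]
    have := hA haA
    rw [Finset.mem_range] at this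
    omega
  set E := m.divisors.filter (fun e => Polynomial.cyclotomic e ℚ ∣ PA) with hEdef
  have hEsum : ∑ e ∈ E, e.totient ≤ D := by
    have hprod : ∏ e ∈ E, Polynomial.cyclotomic e ℚ ∣ PA := by
      apply Finset.prod_dvd_of_coprime
      · intro a ha b hb hab
        exact Polynomial.cyclotomic.isCoprime_rat hab
      · intro e he
        exact (Finset.mem_filter.mp he).2
    have h1 := Polynomial.natDegree_le_of_dvd hprod hPA0
    rw [Polynomial.natDegree_prod _ _ (fun e _ => Polynomial.cyclotomic_ne_zero e ℚ)] at h1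
    calc ∑ e ∈ E, e.totient = ∑ e ∈ E, (Polynomial.cyclotomic e ℚ).natDegree := by
          apply Finset.sum_congr rfl
          intro e _
          rw [Polynomial.natDegree_cyclotomic]
      _ ≤ PA.natDegree := h1
      _ ≤ D := hdegPA
  have hPE : ∀ p ∈ m.primeFactors, ∃ e ∈ E, p ^ m.factorization p ∣ e := by
    intro p hp
    have hpp : p.Prime := Nat.prime_of_mem_primeFactors hp
    have hpm : p ∣ m := Nat.dvd_of_mem_primeFactors hp
    obtain ⟨e, hem, hnd, hdvd⟩ := hprime p hpp hpm
    refine ⟨e, Finset.mem_filter.mpr ⟨hem, hdvd⟩, ?_⟩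
    obtain ⟨hedvd, -⟩ := Nat.mem_divisors.mp hem
    have he0 : e ≠ 0 := (Nat.pos_of_mem_divisors hem).ne'
    by_contra hnot
    apply hnd
    rw [Nat.dvd_div_iff_mul_dvd hpm]
    have h1 : e.factorization ≤ m.factorization :=
      (Nat.factorization_le_iff_dvd he0 hm.ne').mpr hedvd
    have hb : e.factorization p + 1 ≤ m.factorization p := by
      have h2 : ¬ (m.factorization p ≤ e.factorization p) := fun hc =>
        hnot ((Nat.Prime.pow_dvd_iff_le_factorization hpp he0).mpr hc)
      omega
    have hpe0 : p * e ≠ 0 := Nat.mul_ne_zero hpp.pos.ne' he0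
    rw [← Nat.factorization_le_iff_dvd hpe0 hm.ne', Nat.factorization_mul hpp.pos.ne' he0]
    rw [Finsupp.le_def]
    intro q
    rw [Finsupp.add_apply, hpp.factorization, Finsupp.single_apply]
    by_cases hq : p = q
    · subst hq
      rw [if_pos rfl]
      omega
    · rw [if_neg hq]
      have := Finsupp.le_def.mp h1 q
      omega
  have hppow : ∀ p ∈ m.primeFactors, p ^ m.factorization p ≤ 2 * D := by
    intro p hp
    have hpp : p.Prime := Nat.prime_of_mem_primeFactors hp
    obtain ⟨e, heE, hpe⟩ := hPE p hp
    have he0 : e ≠ 0 := (Nat.pos_of_mem_divisors (Finset.mem_filter.mp heE).1).ne'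
    have htot : (p ^ m.factorization p).totient ∣ e.totient := Nat.totient_dvd_of_dvd hpe
    have hetot : e.totient ≤ D :=
      le_trans (Finset.single_le_sum (f := fun e => e.totient) (fun _ _ => Nat.zero_le _) heE)
        hEsum
    have h3 : (p ^ m.factorization p).totient ≤ D :=
      le_trans (Nat.le_of_dvd (Nat.totient_pos.mpr (Nat.pos_of_ne_zero he0)) htot) hetot
    have ha : 0 < m.factorization p :=
      hpp.factorization_pos_of_dvd hm.ne' (Nat.dvd_of_mem_primeFactors hp)
    rw [Nat.totient_prime_pow hpp ha] at h3
    have hsplit : p ^ m.factorization p = p ^ (m.factorization p - 1) * p := by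
      rw [← pow_succ]
      congr 1
      omega
    have hp2 : p ≤ 2 * (p - 1) := by
      have := hpp.two_le
      omega
    calc p ^ m.factorization p = p ^ (m.factorization p - 1) * p := hsplit
      _ ≤ p ^ (m.factorization p - 1) * (2 * (p - 1)) := Nat.mul_le_mul_left _ hp2
      _ = 2 * (p ^ (m.factorization p - 1) * (p - 1)) := by ring
      _ ≤ 2 * D := by omega
  have hsumP : ∑ p ∈ m.primeFactors, (p - 1) ≤ 2 * D := by
    have hsub : m.primeFactors ⊆ E.biUnion (fun e => e.primeFactors) := by
      intro p hp
      obtain ⟨e, heE, hpe⟩ := hPE p hp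
      have hpp : p.Prime := Nat.prime_of_mem_primeFactors hp
      have ha : 0 < m.factorization p :=
        hpp.factorization_pos_of_dvd hm.ne' (Nat.dvd_of_mem_primeFactors hp)
      have he0 : e ≠ 0 := (Nat.pos_of_mem_divisors (Finset.mem_filter.mp heE).1).ne'
      exact Finset.mem_biUnion.mpr
        ⟨e, heE, Nat.mem_primeFactors.mpr
          ⟨hpp, dvd_trans (dvd_pow_self p ha.ne') hpe, he0⟩⟩
    calc ∑ p ∈ m.primeFactors, (p - 1)
        ≤ ∑ p ∈ E.biUnion (fun e => e.primeFactors), (p - 1) :=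
          Finset.sum_le_sum_of_subset hsub
      _ ≤ ∑ e ∈ E, ∑ p ∈ e.primeFactors, (p - 1) := aux_sum_biUnion_le _ _ _
      _ ≤ ∑ e ∈ E, 2 * e.totient := by
          apply Finset.sum_le_sum
          intro e he
          have he0 : e ≠ 0 := (Nat.pos_of_mem_divisors (Finset.mem_filter.mp he).1).ne'
          calc ∑ p ∈ e.primeFactors, (p - 1)
              ≤ 2 * ∏ p ∈ e.primeFactors, (p - 1) :=
                aux_sum_le_two_prod _ (fun p hp => (Nat.prime_of_mem_primeFactors hp).two_le)
            _ ≤ 2 * e.totient := by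
                have := aux_prod_le_totient he0
                omega
      _ = 2 * ∑ e ∈ E, e.totient := by rw [Finset.mul_sum]
      _ ≤ 2 * D := by omega
  set R := m.primeFactors.card with hRdef
  have hRR : R * (R - 1) ≤ 4 * D := by
    have hinj : Set.InjOn (fun p => p - 1) m.primeFactors := by
      intro a ha b hb hab
      have h2a := (Nat.prime_of_mem_primeFactors ha).two_le
      have h2b := (Nat.prime_of_mem_primeFactors hb).two_le
      simp only at hab
      omega
    have hcard : (m.primeFactors.image (fun p => p - 1)).card = R :=
      Finset.card_image_of_injOn hinj
    have h1 := aux_sum_range_le R (m.primeFactors.image (fun p => p - 1)) hcard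
    have h2 : ∑ q ∈ m.primeFactors.image (fun p => p - 1), q
        = ∑ p ∈ m.primeFactors, (p - 1) :=
      Finset.sum_image (fun a ha b hb hab => hinj ha hb hab)
    have h3 := Finset.sum_range_id_mul_two R
    omega
  have hmlepow : m ≤ (2 * D) ^ R := by
    have hfac : m.factorization.prod (fun p k => p ^ k)
        = ∏ p ∈ m.primeFactors, p ^ m.factorization p := by
      rw [Finsupp.prod, Nat.support_factorization]
    calc m = m.factorization.prod (fun p k => p ^ k) :=
          (Nat.factorization_prod_pow_eq_self hm.ne').symm
      _ = ∏ p ∈ m.primeFactors, p ^ m.factorization p := hfac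
      _ ≤ ∏ p ∈ m.primeFactors, (2 * D) := Finset.prod_le_prod' hppow
      _ = (2 * D) ^ R := by rw [Finset.prod_const, hRdef]
  -- final numeric estimates
  have hMrealm : (M : ℝ) = (m : ℝ) := by
    rw [← hMm]
    push_cast
    rfl
  have hlogDnn : (0:ℝ) ≤ Real.log D :=
    Real.log_nonneg (by exact_mod_cast Nat.one_le_cast.mpr (by omega))
  have hargpos : 0 ≤ 6 * Real.sqrt D * Real.log D * Real.sqrt (Real.log (Real.log D)) := by
    apply mul_nonneg _ (Real.sqrt_nonneg _)
    apply mul_nonneg _ hlogDnn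
    apply mul_nonneg (by norm_num) (Real.sqrt_nonneg _)
  have hexp1 : 1 ≤ Real.exp (6 * Real.sqrt D * Real.log D * Real.sqrt (Real.log (Real.log D))) :=
    Real.one_le_exp hargpos
  by_cases hD15 : D ≤ 15
  · -- small D: crude bound suffices
    have hR8 : R ≤ 8 := by
      by_contra hc
      push_neg at hc
      have h9 : 9 ≤ R := hc
      have h72 : 72 ≤ R * (R - 1) := by
        calc 72 = 9 * 8 := by norm_num
          _ ≤ R * (R - 1) := Nat.mul_le_mul h9 (by omega)
      omega
    have hm30 : m ≤ 30 ^ 12 := by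
      calc m ≤ (2 * D) ^ R := hmlepow
        _ ≤ 30 ^ R := Nat.pow_le_pow_left (by omega) R
        _ ≤ 30 ^ 12 := Nat.pow_le_pow_right (by norm_num) (by omega)
    calc (M : ℝ) = m := hMrealm
      _ ≤ ((30 ^ 12 : ℕ) : ℝ) := by exact_mod_cast hm30
      _ = (30:ℝ) ^ (12:ℕ) * 1 := by norm_num
      _ ≤ (30:ℝ) ^ (12:ℕ) * Real.exp
            (6 * Real.sqrt D * Real.log D * Real.sqrt (Real.log (Real.log D))) := by
          apply mul_le_mul_of_nonneg_left hexp1 (by positivity)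
  · push_neg at hD15
    have hD16 : (16 : ℕ) ≤ D := by omega
    have hD16' : (16 : ℝ) ≤ (D : ℝ) := by exact_mod_cast hD16
    have hlog16 : Real.exp 1 < Real.log 16 := by
      have h1 : Real.log 16 = 4 * Real.log 2 := by
        rw [show (16:ℝ) = 2 ^ (4:ℕ) by norm_num, Real.log_pow]
        norm_num
      have h2 := Real.log_two_gt_d9
      have h3 := Real.exp_one_lt_d9
      rw [h1]
      nlinarith
    have hlogD : Real.exp 1 ≤ Real.log D :=
      le_trans hlog16.le (Real.log_le_log (by norm_num) hD16')
    have hloglog : 1 ≤ Real.log (Real.log D) := by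
      calc (1:ℝ) = Real.log (Real.exp 1) := (Real.log_exp 1).symm
        _ ≤ Real.log (Real.log D) := Real.log_le_log (Real.exp_pos 1) hlogD
    have hsqll : 1 ≤ Real.sqrt (Real.log (Real.log D)) := by
      rw [show (1:ℝ) = Real.sqrt 1 from (Real.sqrt_one).symm]
      exact Real.sqrt_le_sqrt hloglog
    have hsqD : (4:ℝ) ≤ Real.sqrt D := by
      rw [show (4:ℝ) = Real.sqrt 16 by
        rw [show (16:ℝ) = 4 ^ 2 by norm_num, Real.sqrt_sq (by norm_num)]]
      exact Real.sqrt_le_sqrt hD16'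
    have hsqDsq : Real.sqrt D ^ 2 = (D:ℝ) := Real.sq_sqrt (by positivity)
    have hRle : (R : ℝ) ≤ 3 * Real.sqrt D := by
      rcases le_or_gt R 1 with h | h
      · calc (R:ℝ) ≤ 1 := by exact_mod_cast h
          _ ≤ 3 * Real.sqrt D := by nlinarith
      · have hR1 : 1 ≤ R := by omega
        have hr2 : (2:ℝ) ≤ (R:ℝ) := by exact_mod_cast h
        have hcast : (R:ℝ) * ((R:ℝ) - 1) ≤ 4 * (D:ℝ) := by
          have h5 : ((R:ℝ)) * (((R - 1 : ℕ)) : ℝ) ≤ 4 * (D:ℝ) := by exact_mod_cast hRR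
          rwa [Nat.cast_sub hR1, Nat.cast_one] at h5
        have h1 : (R:ℝ) ^ 2 ≤ 8 * D := by nlinarith [hcast]
        have h2 : (R:ℝ) ^ 2 ≤ (3 * Real.sqrt D) ^ 2 := by
          rw [mul_pow, hsqDsq]
          nlinarith [h1]
        calc (R:ℝ) = Real.sqrt ((R:ℝ) ^ 2) := (Real.sqrt_sq (Nat.cast_nonneg _)).symm
          _ ≤ Real.sqrt ((3 * Real.sqrt D) ^ 2) := Real.sqrt_le_sqrt h2
          _ = 3 * Real.sqrt D := Real.sqrt_sq (by positivity)
    have hlog2D : Real.log (2 * D) ≤ 2 * Real.log D := by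
      rw [Real.log_mul (by norm_num) (by positivity)]
      have h2 : Real.log 2 ≤ Real.log D :=
        Real.log_le_log (by norm_num) (by exact_mod_cast (by omega : 2 ≤ D))
      linarith
    have hlog2Dnn : (0:ℝ) ≤ Real.log (2 * D) := by
      apply Real.log_nonneg
      have : (1:ℝ) ≤ (D:ℝ) := by exact_mod_cast (by omega : 1 ≤ D)
      linarith
    have hm_exp : (m:ℝ) ≤ Real.exp ((R:ℝ) * Real.log (2 * D)) := by
      calc (m:ℝ) ≤ (((2 * D) ^ R : ℕ) : ℝ) := by exact_mod_cast hmlepow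
        _ = ((2:ℝ) * D) ^ R := by push_cast; ring
        _ = Real.exp (Real.log (2 * D)) ^ R := by rw [Real.exp_log (by positivity)]
        _ = Real.exp ((R:ℝ) * Real.log (2 * D)) := by rw [← Real.exp_nat_mul]
    have hfinal : (R:ℝ) * Real.log (2 * D)
        ≤ 6 * Real.sqrt D * Real.log D * Real.sqrt (Real.log (Real.log D)) := by
      calc (R:ℝ) * Real.log (2 * D) ≤ (3 * Real.sqrt D) * (2 * Real.log D) := by
            apply mul_le_mul hRle hlog2D hlog2Dnn (by positivity)
        _ = 6 * Real.sqrt D * Real.log D := by ring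
        _ = 6 * Real.sqrt D * Real.log D * 1 := (mul_one _).symm
        _ ≤ 6 * Real.sqrt D * Real.log D * Real.sqrt (Real.log (Real.log D)) := by
            apply mul_le_mul_of_nonneg_left hsqll
            apply mul_nonneg (mul_nonneg (by norm_num) (Real.sqrt_nonneg _)) hlogDnn
    calc (M : ℝ) = m := hMrealm
      _ ≤ Real.exp ((R:ℝ) * Real.log (2 * D)) := hm_exp
      _ ≤ Real.exp (6 * Real.sqrt D * Real.log D * Real.sqrt (Real.log (Real.log D))) :=
          Real.exp_le_exp.mpr hfinal
      _ = 1 * Real.exp (6 * Real.sqrt D * Real.log D * Real.sqrt (Real.log (Real.log D))) :=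
          (one_mul _).symm
      _ ≤ (30:ℝ) ^ (12:ℕ) * Real.exp
            (6 * Real.sqrt D * Real.log D * Real.sqrt (Real.log (Real.log D))) := by
          apply mul_le_mul_of_nonneg_right (by norm_num) (Real.exp_nonneg _)

end Main
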